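/- If a simplicial set X has unique horn fillers in all dimensions m ≥ n (i.e., Hom(Δ[m],X) → Hom(Λ[m,k],X) is a bijection for all m ≥ n and 0 ≤ k ≤ m), then X is n-coskeletal. -/

import Mathlib

open CategoryTheory Simplicial

namespace CoskProof

open SimplexCategory Opposite

universe v

lemma eval_app {X : SSet.{v}} {q : ℕ} (ξ : Δ[q] ⟶ X) {c : SimplexCategory} (β : c ⟶ ⦋q⦌) :
    ξ.app (op c) (ULift.up β) = X.map β.op ((SSet.yonedaEquiv (X := X) (n := ⦋q⦌)) ξ) := by
  have h1 := SSet.yonedaEquiv_symm_app_objEquiv_symm (SSet.yonedaEquiv ξ) β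
  rw [Equiv.symm_apply_apply] at h1
  exact h1

lemma yE_symm {X : SSet.{v}} {q : SimplexCategory} (y : X.obj (op q)) :
    SSet.yonedaEquiv (X := X) (n := q) (SSet.yonedaEquiv.symm y) = y :=
  Equiv.apply_symm_apply _ _

lemma comp_yonedaEquiv {X : SSet.{v}} {a b : ℕ} (θ : (⦋a⦌ : SimplexCategory) ⟶ ⦋b⦌)
    (x : Δ[b] ⟶ X) :
    (SSet.yonedaEquiv (X := X) (n := ⦋a⦌)) (SSet.stdSimplex.map θ ≫ x)
      = X.map θ.op ((SSet.yonedaEquiv (X := X) (n := ⦋b⦌)) x) := by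
  exact (SSet.yonedaEquiv_naturality θ x).symm

lemma factor_spec {c : SimplexCategory} {q : ℕ} (f : c ⟶ ⦋q + 1⦌) (i : Fin (q + 2))
    (hi : ∀ t, f.toOrderHom t ≠ i) :
    (f ≫ SimplexCategory.σ (Fin.predAbove 0 i)) ≫ SimplexCategory.δ i = f := by
  induction' c using SimplexCategory.rec with c'
  exact SimplexCategory.factor_δ_spec f i hi

lemma le_of_union_eq_univ {m : ℕ} {c : SimplexCategory} {α : c ⟶ ⦋m⦌} {k : Fin (m + 1)}
    (hα : Set.range α.toOrderHom ∪ {k} = Set.univ) : m ≤ c.len + 1 := by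
  have hsurj : Function.Surjective (Fin.cons k α.toOrderHom : Fin (c.len + 2) → Fin (m + 1)) := by
    intro y
    rcases Set.eq_univ_iff_forall.mp hα y with ⟨t, ht⟩ | hy
    · exact ⟨t.succ, by simpa [Fin.cons_succ] using ht⟩
    · exact ⟨0, by simpa [Fin.cons_zero] using hy.symm⟩
  have := Fintype.card_le_of_surjective _ hsurj
  simp only [Fintype.card_fin] at this
  omega

lemma eq_δ_zero {m : ℕ} (α : (⦋m⦌ : SimplexCategory) ⟶ ⦋m + 1⦌)
    (hα : Set.range α.toOrderHom ∪ {(0 : Fin (m + 2))} = Set.univ) : α = SimplexCategory.δ 0 := by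
  have h0 : (0 : Fin (m + 2)) ∉ Set.range α.toOrderHom := by
    intro h0
    have hs : Function.Surjective α.toOrderHom := by
      intro y
      rcases Set.eq_univ_iff_forall.mp hα y with hy | hy
      · exact hy
      · simpa [Set.mem_singleton_iff.mp hy] using h0
    have := Fintype.card_le_of_surjective _ hs
    simp at this
  have hinj : Function.Injective α.toOrderHom := by
    set α' : Fin (m + 1) → {x : Fin (m + 2) // x ≠ 0} :=
      fun t => ⟨α.toOrderHom t, fun ht => h0 ⟨t, ht⟩⟩ with hα'
    have hsurj : Function.Surjective α' := by
      rintro ⟨y, hy⟩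
      rcases Set.eq_univ_iff_forall.mp hα y with ⟨t, ht⟩ | hy'
      · exact ⟨t, Subtype.ext ht⟩
      · exact absurd (Set.mem_singleton_iff.mp hy') hy
    have hcard : Fintype.card {x : Fin (m + 2) // x ≠ 0} = m + 1 := by
      simp [Fintype.card_subtype_compl]
    have hbij : Function.Bijective α' :=
      (Fintype.bijective_iff_surjective_and_card α').mpr ⟨hsurj, by simp [hcard]⟩
    intro s t hst
    exact hbij.injective (Subtype.ext hst)
  have hsm : StrictMono α.toOrderHom := α.toOrderHom.monotone.strictMono_of_injective hinj
  have hδsm : StrictMono (SimplexCategory.δ (0 : Fin (m + 2))).toOrderHom :=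
    (Fin.succAboveOrderEmb (0 : Fin (m + 2))).strictMono
  have hrange : Set.range α.toOrderHom
      = Set.range (SimplexCategory.δ (0 : Fin (m + 2))).toOrderHom := by
    have hr2 : Set.range (SimplexCategory.δ (0 : Fin (m + 2))).toOrderHom = {0}ᶜ := by
      show Set.range (Fin.succAbove 0) = _
      rw [Fin.succAbove_zero, Fin.range_succ]
    rw [hr2]
    ext x
    simp only [Set.mem_compl_iff, Set.mem_singleton_iff]
    constructor
    · rintro ⟨t, rfl⟩ h
      exact h0 ⟨t, h⟩
    · intro hx
      rcases Set.eq_univ_iff_forall.mp hα x with hy | hy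
      · exact hy
      · exact absurd (Set.mem_singleton_iff.mp hy) hx
  haveI : WellFoundedLT (Fin ((⦋m⦌ : SimplexCategory).len + 1)) :=
    inferInstanceAs (WellFoundedLT (Fin (m + 1)))
  have : ⇑α.toOrderHom = ⇑(SimplexCategory.δ (0 : Fin (m + 2))).toOrderHom :=
    (hsm.range_inj hδsm).mp hrange
  exact SimplexCategory.Hom.ext _ _ (OrderHom.ext _ _ this)

/-- Two maps out of a horn agree iff they agree on all simplices of the horn. -/
lemma horn_comp_eq {X : SSet.{v}} {m : ℕ} {k : Fin (m + 1)} {σ' τ : Δ[m] ⟶ X}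
    (hf : ∀ {c : SimplexCategory} (α : c ⟶ ⦋m⦌),
      Set.range α.toOrderHom ∪ {k} ≠ Set.univ →
        X.map α.op ((SSet.yonedaEquiv (X := X) (n := ⦋m⦌)) σ') = X.map α.op ((SSet.yonedaEquiv (X := X) (n := ⦋m⦌)) τ)) :
    (SSet.horn m k).ι ≫ σ' = (SSet.horn m k).ι ≫ τ := by
  ext cop a
  induction cop using Opposite.rec with
  | op c =>
    obtain ⟨a, ha⟩ := a
    show σ'.app (op c) a = τ.app (op c) a
    have h1 : a = ULift.up a.down := rfl
    rw [h1, eval_app, eval_app]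
    exact hf a.down ha

lemma bij_low (X : SSet.{v}) (n : ℕ) (d : ℕ) (hd : d ≤ n) :
    Function.Bijective (fun x : Δ[d] ⟶ X => (SSet.truncation n).map x) := by
  have hdmk : (⦋d⦌ : SimplexCategory).len ≤ n := hd
  constructor
  · intro x y hxy
    apply ((SSet.yonedaEquiv (X := X) (n := ⦋d⦌))).injective
    exact congrFun (congrArg (fun F => F.app (op (⟨⦋d⦌, hdmk⟩ : SimplexCategory.Truncated n)))
      hxy) (ULift.up (𝟙 ⦋d⦌))
  · intro F
    refine ⟨((SSet.yonedaEquiv (X := X) (n := ⦋d⦌))).symm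
      (F.app (op (⟨⦋d⦌, hdmk⟩ : SimplexCategory.Truncated n)) (ULift.up (𝟙 ⦋d⦌))), ?_⟩
    ext cop a
    induction cop using Opposite.rec with
    | op cc =>
      obtain ⟨c, hc⟩ := cc
      show (((SSet.yonedaEquiv (X := X) (n := ⦋d⦌))).symm _).app (op c) a = _
      have h1 : a = ULift.up a.down := rfl
      rw [h1, eval_app]
      simp only [Equiv.apply_symm_apply]
      let φ : (⟨c, hc⟩ : SimplexCategory.Truncated n) ⟶ ⟨⦋d⦌, hdmk⟩ := ObjectProperty.homMk a.down
      let ι : ((SSet.truncation n).obj Δ[d]).obj (op (⟨⦋d⦌, hdmk⟩ : SimplexCategory.Truncated n)) :=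
        ULift.up (𝟙 ⦋d⦌)
      have hnat := NatTrans.naturality_apply F φ.op ι
      have h2 : ((SSet.truncation n).obj Δ[d]).map φ.op ι = ULift.up a.down := by
        show ULift.up (a.down ≫ 𝟙 ⦋d⦌) = ULift.up a.down
        rw [Category.comp_id]
      rw [h2] at hnat
      exact (congrArg (fun z => X.map (Quiver.Hom.op a.down) z) (Equiv.apply_symm_apply _ _)).trans
        hnat.symm

/-- Well-definedness of values defined by factoring through a missing face. -/
lemma WD_le {X : SSet.{v}} : ∀ {p : ℕ} (xel : Fin (p + 2) → X.obj (op ⦋p⦌))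
    (_ : ∀ (j : ℕ), j ≤ p → ∀ (a b : (⦋j⦌ : SimplexCategory) ⟶ ⦋p⦌) (i i' : Fin (p + 2)),
      a ≫ SimplexCategory.δ i = b ≫ SimplexCategory.δ i' →
      X.map a.op (xel i) = X.map b.op (xel i'))
    {c : SimplexCategory} (i i' : Fin (p + 2)), i ≤ i' → ∀ (β β' : c ⟶ ⦋p⦌),
    β ≫ SimplexCategory.δ i = β' ≫ SimplexCategory.δ i' →
    X.map β.op (xel i) = X.map β'.op (xel i')
  := @fun p xel hcompat c i i' hii' β β' heq => by
    rcases eq_or_lt_of_le hii' with rfl | hlt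
    · obtain rfl : β = β' := by rwa [cancel_mono] at heq
      rfl
    · match p, xel, hcompat, i, i', β, β', heq, hlt with
      | 0, xel, hcompat, i, i', β, β', heq, hlt =>
        exfalso
        have h1 := congrArg (fun f => f.toOrderHom 0) heq
        simp only [SimplexCategory.comp_toOrderHom, OrderHom.comp_coe,
          Function.comp_apply] at h1
        have hv1 : (i : ℕ) = 0 ∧ (i' : ℕ) = 1 := by
          rw [Fin.lt_def] at hlt
          have h2 := i'.isLt
          omega
        obtain rfl : i = 0 := Fin.ext (by simp only [Fin.val_zero, hv1.1])
        obtain rfl : i' = 1 := Fin.ext (by simp only [Fin.val_one, hv1.2])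
        haveI : Subsingleton (Fin ((⦋0⦌ : SimplexCategory).len + 1)) :=
          inferInstanceAs (Subsingleton (Fin 1))
        have hb : β.toOrderHom 0 = 0 := Subsingleton.elim _ _
        have hb' : β'.toOrderHom 0 = 0 := Subsingleton.elim _ _
        rw [hb, hb'] at h1
        exact absurd h1 (by decide)
      | (r + 1), xel, hcompat, i, i', β, β', heq, hlt =>
        have hne : i' ≠ 0 := by
          rintro rfl
          exact Fin.not_lt_zero i hlt
        have hmiss : ∀ t, β.toOrderHom t ≠ i'.pred hne := by
          intro t ht
          have h1 : (β ≫ SimplexCategory.δ i).toOrderHom t = i' := by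
            show (SimplexCategory.δ i).toOrderHom (β.toOrderHom t) = i'
            rw [ht]
            show Fin.succAbove i (i'.pred hne) = i'
            rw [Fin.succAbove_of_le_castSucc, Fin.succ_pred]
            rw [Fin.le_def]
            simp only [Fin.val_castSucc, Fin.val_pred]
            rw [Fin.lt_def] at hlt
            omega
          rw [heq] at h1
          exact Fin.succAbove_ne i' (β'.toOrderHom t) h1
        have hγ := factor_spec β (i'.pred hne) hmiss
        have hilast : i ≠ Fin.last (r + 2) := Fin.ne_last_of_lt hlt
        have hkey : SimplexCategory.δ (i'.pred hne) ≫ SimplexCategory.δ i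
            = SimplexCategory.δ (i.castPred hilast) ≫ SimplexCategory.δ i' := by
          have hle : i.castPred hilast ≤ i'.pred hne := by
            rw [Fin.le_def]
            simp only [Fin.coe_castPred, Fin.val_pred]
            rw [Fin.lt_def] at hlt
            omega
          have h2 := SimplexCategory.δ_comp_δ hle
          rw [Fin.succ_pred, Fin.castSucc_castPred] at h2
          exact h2.symm
        have hβ' : β' = (β ≫ SimplexCategory.σ (Fin.predAbove 0 (i'.pred hne)))
            ≫ SimplexCategory.δ (i.castPred hilast) := by
          have hc2 : ((β ≫ SimplexCategory.σ (Fin.predAbove 0 (i'.pred hne)))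
                ≫ SimplexCategory.δ (i.castPred hilast)) ≫ SimplexCategory.δ i'
              = β' ≫ SimplexCategory.δ i' := by
            rw [Category.assoc, ← hkey, ← Category.assoc, hγ, heq]
          exact ((cancel_mono (SimplexCategory.δ i')).mp hc2).symm
        conv_lhs => rw [← hγ]
        rw [hβ']
        simp only [op_comp, FunctorToTypes.map_comp_apply]
        rw [hcompat r (by omega) (SimplexCategory.δ (i'.pred hne))
          (SimplexCategory.δ (i.castPred hilast)) i i' hkey]

lemma bijAll {X : SSet.{v}} {n : ℕ}
    (h : ∀ m : ℕ, n ≤ m → ∀ k : Fin (m + 1),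
      Function.Bijective (fun σ : Δ[m] ⟶ X => (SSet.horn m k).ι ≫ σ)) :
    ∀ d : ℕ, Function.Bijective (fun x : Δ[d] ⟶ X => (SSet.truncation n).map x) := by
  intro d
  induction d using Nat.strong_induction_on with
  | _ d IH =>
  rcases le_or_gt d n with hd | hd
  · exact bij_low X n d hd
  obtain ⟨p, rfl⟩ : ∃ p, d = p + 1 := ⟨d - 1, by omega⟩
  have hnp : n ≤ p := by omega
  constructor
  · -- injectivity
    intro x y hxy
    dsimp only at hxy
    apply (h (p + 1) (by omega) 0).injective
    dsimp only
    apply horn_comp_eq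
    intro c α hα
    obtain ⟨i, hi⟩ := (Set.ne_univ_iff_exists_notMem _).mp hα
    simp only [Set.mem_union, Set.mem_singleton_iff, not_or] at hi
    have hfac := factor_spec α i (fun t ht => hi.1 ⟨t, ht⟩)
    have hface : SSet.stdSimplex.map (SimplexCategory.δ i) ≫ x
        = SSet.stdSimplex.map (SimplexCategory.δ i) ≫ y := by
      apply (IH p (by omega)).injective
      dsimp only
      rw [Functor.map_comp, Functor.map_comp, hxy]
    rw [← hfac, op_comp, FunctorToTypes.map_comp_apply, FunctorToTypes.map_comp_apply,
      ← comp_yonedaEquiv, ← comp_yonedaEquiv, hface, ← comp_yonedaEquiv, ← comp_yonedaEquiv]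
  · -- surjectivity
    intro G
    choose ξ hξ using fun i : Fin (p + 2) => (IH p (by omega)).surjective
      ((SSet.truncation n).map (SSet.stdSimplex.map (SimplexCategory.δ i)) ≫ G)
    dsimp only at hξ
    obtain ⟨xel, hxel⟩ : ∃ xel : Fin (p + 2) → X.obj (op ⦋p⦌),
        ∀ i, xel i = (SSet.yonedaEquiv (X := X) (n := ⦋p⦌)) (ξ i) := ⟨_, fun _ => rfl⟩
    have hcompat : ∀ (j : ℕ), j ≤ p → ∀ (a b : (⦋j⦌ : SimplexCategory) ⟶ ⦋p⦌)
        (i i' : Fin (p + 2)), a ≫ SimplexCategory.δ i = b ≫ SimplexCategory.δ i' →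
        X.map a.op (xel i) = X.map b.op (xel i') := by
      intro j hj a b i i' hab
      rw [hxel, hxel, ← comp_yonedaEquiv, ← comp_yonedaEquiv]
      apply congrArg
      apply (IH j (by omega)).injective
      dsimp only
      rw [Functor.map_comp, Functor.map_comp, hξ i, hξ i', ← Category.assoc, ← Category.assoc,
        ← Functor.map_comp, ← Functor.map_comp, ← Functor.map_comp SSet.stdSimplex, ← Functor.map_comp SSet.stdSimplex, hab]
    have WD : ∀ {c : SimplexCategory} (i i' : Fin (p + 2)) (β β' : c ⟶ ⦋p⦌),
        β ≫ SimplexCategory.δ i = β' ≫ SimplexCategory.δ i' →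
        X.map β.op (xel i) = X.map β'.op (xel i') := by
      intro c i i' β β' heq
      rcases le_total i i' with hle | hle
      · exact WD_le xel hcompat i i' hle β β' heq
      · exact (WD_le xel hcompat i' i hle β' β heq.symm).symm
    have hchoice : ∀ {cop : SimplexCategoryᵒᵖ} (a : (SSet.horn (p + 1) 0).obj cop),
        ∃ i : Fin (p + 2), ∀ t, a.1.down.toOrderHom t ≠ i := by
      intro cop a
      obtain ⟨i, hi⟩ := (Set.ne_univ_iff_exists_notMem _).mp a.2
      exact ⟨i, fun t ht => hi (Or.inl ⟨t, ht⟩)⟩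
    obtain ⟨g, hgapp⟩ : ∃ g : (SSet.horn (p + 1) 0 : SSet) ⟶ X, ∀ (cop : SimplexCategoryᵒᵖ)
        (a : (SSet.horn (p + 1) 0).obj cop),
        g.app cop a = X.map ((a.1.down ≫ SimplexCategory.σ
          (Fin.predAbove 0 (hchoice a).choose)).op) (xel (hchoice a).choose) := by
      have gkey0 : ∀ {cop : SimplexCategoryᵒᵖ} (a : (SSet.horn (p + 1) 0).obj cop)
          (i : Fin (p + 2)) (β : cop.unop ⟶ ⦋p⦌), β ≫ SimplexCategory.δ i = a.1.down →
          X.map ((a.1.down ≫ SimplexCategory.σ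
            (Fin.predAbove 0 (hchoice a).choose)).op) (xel (hchoice a).choose)
            = X.map β.op (xel i) := by
        intro cop a i β hβ
        apply WD
        rw [factor_spec a.1.down _ (hchoice a).choose_spec, hβ]
      refine ⟨NatTrans.mk (fun cop => TypeCat.ofHom (fun a => X.map ((a.1.down ≫ SimplexCategory.σ
          (Fin.predAbove 0 (hchoice a).choose)).op) (xel (hchoice a).choose))) ?_,
        fun cop a => rfl⟩
      intro cop₁ cop₂ f
      ext a
      show X.map _ (xel _) = X.map f (X.map _ (xel _))
      erw [gkey0 ((SSet.horn (p + 1) 0 : SSet).map f a) (hchoice a).choose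
        (f.unop ≫ (a.1.down ≫ SimplexCategory.σ (Fin.predAbove 0 (hchoice a).choose))) ?_]
      · rw [op_comp, FunctorToTypes.map_comp_apply]
        rfl
      · rw [Category.assoc, factor_spec a.1.down _ (hchoice a).choose_spec]
        rfl
    have gkey : ∀ {cop : SimplexCategoryᵒᵖ} (a : (SSet.horn (p + 1) 0).obj cop)
        (i : Fin (p + 2)) (β : cop.unop ⟶ ⦋p⦌), β ≫ SimplexCategory.δ i = a.1.down →
        g.app cop a = X.map β.op (xel i) := by
      intro cop a i β hβ
      rw [hgapp]
      apply WD
      rw [factor_spec a.1.down _ (hchoice a).choose_spec, hβ]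
    obtain ⟨x, hx⟩ := (h (p + 1) (by omega) 0).surjective g
    dsimp only at hx
    refine ⟨x, ?_⟩
    obtain ⟨xhat, hxhat⟩ : ∃ xh : X.obj (op ⦋p + 1⦌), xh = (SSet.yonedaEquiv (X := X) (n := ⦋p + 1⦌)) x :=
      ⟨_, rfl⟩
    have hhorn : ∀ {c : SimplexCategory} (α : c ⟶ ⦋p + 1⦌),
        Set.range α.toOrderHom ∪ {(0 : Fin (p + 2))} ≠ Set.univ →
        ∀ (i : Fin (p + 2)) (β : c ⟶ ⦋p⦌), β ≫ SimplexCategory.δ i = α →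
        X.map α.op xhat = X.map β.op (xel i) := by
      intro c α ha i β hβ
      have h1 : X.map α.op xhat = x.app (op c) (ULift.up α) := by
        rw [hxhat]; exact (eval_app x α).symm
      have h2 : x.app (op c) (ULift.up α) = g.app (op c) ⟨ULift.up α, ha⟩ :=
        congrArg (fun (F : (SSet.horn (p + 1) 0 : SSet) ⟶ X) => F.app (op c)
          ⟨ULift.up α, ha⟩) hx
      rw [h1, h2]
      exact gkey (cop := op c) ⟨ULift.up α, ha⟩ i β hβ
    have hG : ∀ {c : SimplexCategory} (hc : c.len ≤ n) (α : c ⟶ ⦋p + 1⦌),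
        Set.range α.toOrderHom ∪ {(0 : Fin (p + 2))} ≠ Set.univ →
        X.map α.op xhat = G.app (op (⟨c, hc⟩ : SimplexCategory.Truncated n)) (ULift.up α) := by
      intro c hc α ha
      obtain ⟨i, hi⟩ := (Set.ne_univ_iff_exists_notMem _).mp ha
      have hi' : ∀ t, α.toOrderHom t ≠ i := fun t ht => hi (Or.inl ⟨t, ht⟩)
      have hβ := factor_spec α i hi'
      rw [hhorn α ha i _ hβ, hxel]
      have h2 : X.map (α ≫ SimplexCategory.σ (Fin.predAbove 0 i)).op
            ((SSet.yonedaEquiv (X := X) (n := ⦋p⦌)) (ξ i))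
          = (ξ i).app (op c) (ULift.up (α ≫ SimplexCategory.σ (Fin.predAbove 0 i))) :=
        (eval_app (ξ i) _).symm
      have h4 : (ξ i).app (op c) (ULift.up (α ≫ SimplexCategory.σ (Fin.predAbove 0 i)))
          = G.app (op (⟨c, hc⟩ : SimplexCategory.Truncated n))
              (ULift.up ((α ≫ SimplexCategory.σ (Fin.predAbove 0 i)) ≫ SimplexCategory.δ i)) :=
        congrArg
          (fun (F : (SSet.truncation n).obj Δ[p] ⟶ (SSet.truncation n).obj X) =>
            F.app (op (⟨c, hc⟩ : SimplexCategory.Truncated n))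
          (ULift.up (α ≫ SimplexCategory.σ (Fin.predAbove 0 i)))) (hξ i)
      rw [h2, h4, hβ]
    -- clean up context before final verification
    clear hx hhorn gkey hgapp hchoice WD hcompat hξ hxel
    clear g ξ xel
    show (SSet.truncation n).map x = G
    ext cop a
    induction cop using Opposite.rec with
    | op cc =>
      obtain ⟨c, hc⟩ := cc
      induction' c using SimplexCategory.rec with j
      show x.app (op ⦋j⦌) a = G.app (op ⟨⦋j⦌, hc⟩) a
      have hj : j ≤ n := hc
      obtain ⟨ad⟩ := a
      revert ad
      refine fun (ad : (⦋j⦌ : SimplexCategory) ⟶ ⦋p + 1⦌) => ?_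
      by_cases ha : Set.range ad.toOrderHom ∪ {(0 : Fin (p + 2))} = Set.univ
      · -- a not in the horn: then j = n, p = n and ad = δ 0
        have hle : p + 1 ≤ j + 1 := le_of_union_eq_univ (α := ad) ha
        obtain rfl : n = j := by omega
        obtain rfl : n = p := by omega
        have had : ad = SimplexCategory.δ 0 := eq_δ_zero ad ha
        subst had
        rw [eval_app x (SimplexCategory.δ 0), ← hxhat]
        have hzw : SSet.stdSimplex.map (SimplexCategory.δ (0 : Fin (n + 2))) ≫ x
            = ((SSet.yonedaEquiv (X := X) (n := ⦋n⦌))).symm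
              (G.app (op (⟨⦋n⦌, hc⟩ : SimplexCategory.Truncated n))
                (ULift.up (SimplexCategory.δ 0))) := by
          apply (h n le_rfl 0).injective
          dsimp only
          apply horn_comp_eq
          intro c' α' hα'
          rw [comp_yonedaEquiv]
          simp only [Equiv.apply_symm_apply]
          rw [← hxhat]
          obtain ⟨v, hv⟩ := (Set.ne_univ_iff_exists_notMem _).mp hα'
          simp only [Set.mem_union, Set.mem_singleton_iff, not_or] at hv
          have hn0 : n ≠ 0 := by
            rintro rfl
            haveI : Subsingleton (Fin ((⦋0⦌ : SimplexCategory).len + 1)) :=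
              inferInstanceAs (Subsingleton (Fin 1))
            exact hv.2 (Subsingleton.elim v 0)
          obtain ⟨r, rfl⟩ := Nat.exists_eq_succ_of_ne_zero hn0
          have hvr : ∀ t, α'.toOrderHom t ≠ v := fun t ht => hv.1 ⟨t, ht⟩
          have hfac := factor_spec α' v hvr
          have hrle : (⦋r⦌ : SimplexCategory).len ≤ r + 1 := by
            show r ≤ r + 1; omega
          have hmid : X.map (SimplexCategory.δ v ≫ SimplexCategory.δ 0).op xhat
              = G.app (op (⟨⦋r⦌, hrle⟩ : SimplexCategory.Truncated (r + 1)))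
                  (ULift.up (SimplexCategory.δ v ≫ SimplexCategory.δ 0)) := by
            apply hG
            intro hun
            rcases Set.eq_univ_iff_forall.mp hun (Fin.succ v) with ⟨t, ht⟩ | h0
            · have ht2 : Fin.succAbove 0 ((SimplexCategory.δ v).toOrderHom t) = Fin.succ v := ht
              rw [Fin.succAbove_zero] at ht2
              exact Fin.succAbove_ne v t (Fin.succ_injective _ ht2)
            · exact Fin.succ_ne_zero v (Set.mem_singleton_iff.mp h0)
          have hnat : G.app (op (⟨⦋r⦌, hrle⟩ : SimplexCategory.Truncated (r + 1)))
              (ULift.up (SimplexCategory.δ v ≫ SimplexCategory.δ 0))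
              = X.map (SimplexCategory.δ v).op
                  (G.app (op (⟨⦋r + 1⦌, hc⟩ : SimplexCategory.Truncated (r + 1)))
                    (ULift.up (SimplexCategory.δ 0))) := by
            let φ : (⟨⦋r⦌, hrle⟩ : SimplexCategory.Truncated (r + 1)) ⟶ ⟨⦋r + 1⦌, hc⟩ :=
              ObjectProperty.homMk (SimplexCategory.δ v)
            have h6 := NatTrans.naturality_apply G φ.op
              (ULift.up (SimplexCategory.δ (0 : Fin (r + 3))) : ((SSet.truncation (r + 1)).obj
                Δ[r + 1 + 1]).obj (op (⟨⦋r + 1⦌, hc⟩ : SimplexCategory.Truncated (r + 1))))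
            have h7 : ((SSet.truncation (r + 1)).obj Δ[r + 1 + 1]).map φ.op
                (ULift.up (SimplexCategory.δ (0 : Fin (r + 3))))
                = ULift.up (SimplexCategory.δ v ≫ SimplexCategory.δ 0) := rfl
            have h8 : ∀ (z : ((SSet.truncation (r + 1)).obj X).obj
                (op (⟨⦋r + 1⦌, hc⟩ : SimplexCategory.Truncated (r + 1)))),
                ((SSet.truncation (r + 1)).obj X).map φ.op z
                  = X.map (SimplexCategory.δ v).op z := fun _ => rfl
            rw [h7, h8] at h6
            exact h6
          conv_lhs => rw [← FunctorToTypes.map_comp_apply, ← op_comp, ← hfac,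
            Category.assoc, op_comp, FunctorToTypes.map_comp_apply, hmid, hnat]
          conv_rhs => rw [← hfac, op_comp, FunctorToTypes.map_comp_apply]
          exact congrArg (fun z => X.map (α' ≫ SimplexCategory.σ (Fin.predAbove 0 v)).op
            (X.map (SimplexCategory.δ v).op z)) (Equiv.apply_symm_apply _ _).symm
        have h5 := congrArg ((SSet.yonedaEquiv (X := X) (n := ⦋n⦌))) hzw
        rw [comp_yonedaEquiv] at h5
        simp only [Equiv.apply_symm_apply] at h5
        rw [← hxhat] at h5
        exact h5.trans (Equiv.apply_symm_apply _ _)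
      · rw [eval_app x ad, ← hxhat]
        exact hG hc ad ha


end CoskProof

universe u

/-- If a simplicial set `X` has unique horn fillers in all dimensions `m ≥ n`
(i.e. `Hom(Δ[m], X) → Hom(Λ[m,k], X)` is a bijection for all `m ≥ n` and all
`k : Fin (m+1)`), then `X` is `n`-coskeletal: the unit map `X ⟶ cosk_n X` is an
isomorphism. -/
theorem coskeletal_of_unique_horn_fillers (X : SSet.{u}) (n : ℕ)
    (h : ∀ m : ℕ, n ≤ m → ∀ k : Fin (m + 1),
      Function.Bijective (fun σ : Δ[m] ⟶ X => (SSet.horn m k).ι ≫ σ)) :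
    IsIso ((SSet.coskAdj n).unit.app X) := by
  have hbij := CoskProof.bijAll h
  suffices hs : ∀ (cop : SimplexCategoryᵒᵖ), IsIso (((SSet.coskAdj n).unit.app X).app cop) by
    apply NatIso.isIso_of_isIso_app
  intro cop
  induction cop using Opposite.rec with
  | op c =>
    induction' c using SimplexCategory.rec with d
    rw [CategoryTheory.isIso_iff_bijective]
    have heq : ⇑(((SSet.coskAdj n).unit.app X).app (Opposite.op (SimplexCategory.mk d)))
        = fun y => (SSet.yonedaEquiv (X := _) (n := (SimplexCategory.mk d)))
            (((SSet.coskAdj n).homEquiv _ _)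
              ((SSet.truncation n).map (((SSet.yonedaEquiv (X := X) (n := (SimplexCategory.mk d)))).symm y))) := by
      funext y
      have h1 : ((SSet.coskAdj n).unit.app X).app (Opposite.op (SimplexCategory.mk d)) y
          = (SSet.yonedaEquiv (X := _) (n := (SimplexCategory.mk d)))
              ((((SSet.yonedaEquiv (X := X) (n := (SimplexCategory.mk d)))).symm y)
                ≫ (SSet.coskAdj n).unit.app X) := by
        conv_lhs => rw [show y = (SSet.yonedaEquiv (X := X) (n := (SimplexCategory.mk d)))
          (((SSet.yonedaEquiv (X := X) (n := (SimplexCategory.mk d)))).symm y) from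
            (Equiv.apply_symm_apply _ _).symm]
        rfl
      rw [h1]
      congr 1
      calc (((SSet.yonedaEquiv (X := X) (n := (SimplexCategory.mk d)))).symm y) ≫ (SSet.coskAdj n).unit.app X
          = (((SSet.yonedaEquiv (X := X) (n := (SimplexCategory.mk d)))).symm y)
              ≫ ((SSet.coskAdj n).homEquiv _ _) (𝟙 _) := by
            rw [Adjunction.homEquiv_id]
        _ = ((SSet.coskAdj n).homEquiv _ _)
              ((SSet.truncation n).map (((SSet.yonedaEquiv (X := X) (n := (SimplexCategory.mk d)))).symm y)
                ≫ 𝟙 _) := by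
            rw [Adjunction.homEquiv_naturality_left]
        _ = ((SSet.coskAdj n).homEquiv _ _)
              ((SSet.truncation n).map (((SSet.yonedaEquiv (X := X) (n := (SimplexCategory.mk d)))).symm y)) := by
            rw [Category.comp_id]
    rw [heq]
    exact (((((SSet.yonedaEquiv (X := X) (n := (SimplexCategory.mk d)))).symm.trans
      (Equiv.ofBijective _ (hbij d))).trans
        ((SSet.coskAdj n).homEquiv _ _)).trans
          ((SSet.yonedaEquiv (X := _) (n := (SimplexCategory.mk d))))).bijective
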